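/- Let 0 < D ≤ A. For every representation N of n over any digit set S ⊇ {-1,0,1}, there exists a representation N' of n over {-1,0,1} with T(N', λ') ≤ T(N, λ), where λ and λ' are the respective highest indices. In other words, the digit set {-1,0,1} suffices to achieve the minimal parallel computation time. -/
import Mathlib


noncomputable def T (D A : ℝ) (d : ℕ → ℤ) : ℕ → ℝ
  | 0 => if d 0 = 0 then 0 else (((d 0).natAbs : ℝ) - 1) * A
  | i + 1 =>
      if d (i + 1) = 0 then T D A d i
      else if ∀ j < i + 1, d j = 0 then
        ((i : ℝ) + 1) * D + (((d (i + 1)).natAbs : ℝ) - 1) * A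
      else max (T D A d i) (((i : ℝ) + 1) * D) + ((d (i + 1)).natAbs : ℝ) * A

noncomputable def delta (A : ℝ) (d : ℕ → ℤ) : ℕ → ℝ
  | 0 => 0
  | i + 1 =>
      if d (i + 1) = 0 then delta A d i - 1
      else if ∀ j < i + 1, d j = 0 then 0
      else max (delta A d i + (A - 1)) A

def val (d : ℕ → ℤ) (lam : ℕ) : ℤ := ∑ i ∈ Finset.range (lam + 1), d i * 2 ^ i

lemma T_zero_def (D A : ℝ) (d : ℕ → ℤ) :
    T D A d 0 = if d 0 = 0 then 0 else (((d 0).natAbs : ℝ) - 1) * A := rfl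

lemma T_succ_def (D A : ℝ) (d : ℕ → ℤ) (i : ℕ) :
    T D A d (i + 1) =
      if d (i + 1) = 0 then T D A d i
      else if ∀ j < i + 1, d j = 0 then
        ((i : ℝ) + 1) * D + (((d (i + 1)).natAbs : ℝ) - 1) * A
      else max (T D A d i) (((i : ℝ) + 1) * D) + ((d (i + 1)).natAbs : ℝ) * A := rfl

lemma T_congr (D A : ℝ) {d e : ℕ → ℤ} :
    ∀ i, (∀ j, j ≤ i → d j = e j) → T D A d i = T D A e i := by
  intro i
  induction i with
  | zero => intro h; rw [T_zero_def, T_zero_def, h 0 le_rfl]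
  | succ n ih =>
      intro h
      have h' : ∀ j, j ≤ n → d j = e j := fun j hj => h j (hj.trans n.le_succ)
      have hiff : (∀ j < n + 1, d j = 0) ↔ (∀ j < n + 1, e j = 0) := by
        constructor <;> intro hz j hj
        · rw [← h' j (Nat.lt_succ_iff.mp hj)]; exact hz j hj
        · rw [h' j (Nat.lt_succ_iff.mp hj)]; exact hz j hj
      rw [T_succ_def, T_succ_def, ih h', h (n+1) le_rfl]
      by_cases hz : ∀ j < n + 1, e j = 0
      · rw [if_pos (hiff.mpr hz), if_pos hz]
      · rw [if_neg (fun hh => hz (hiff.mp hh)), if_neg hz]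

lemma T_all_zero (D A : ℝ) {d : ℕ → ℤ} :
    ∀ i, (∀ j, j ≤ i → d j = 0) → T D A d i = 0 := by
  intro i
  induction i with
  | zero => intro h; rw [T_zero_def, if_pos (h 0 le_rfl)]
  | succ n ih =>
      intro h
      rw [T_succ_def, if_pos (h (n+1) le_rfl)]
      exact ih fun j hj => h j (hj.trans n.le_succ)

lemma T_nonneg {D A : ℝ} (hD : 0 ≤ D) (hA : 0 ≤ A) (d : ℕ → ℤ) :
    ∀ i, 0 ≤ T D A d i := by
  intro i
  induction i with
  | zero =>
      rw [T_zero_def]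
      split_ifs with h
      · exact le_rfl
      · have : (1:ℝ) ≤ ((d 0).natAbs : ℝ) := by
          exact_mod_cast Int.natAbs_pos.mpr h
        nlinarith
  | succ n ih =>
      rw [T_succ_def]
      split_ifs with h1 h2
      · exact ih
      · have : (1:ℝ) ≤ ((d (n+1)).natAbs : ℝ) := by
          exact_mod_cast Int.natAbs_pos.mpr h1
        have hn : (0:ℝ) ≤ ((n:ℝ)+1) * D := by positivity
        nlinarith
      · have : (0:ℝ) ≤ ((d (n+1)).natAbs : ℝ) := by positivity
        have h2 : 0 ≤ max (T D A d n) (((n:ℝ)+1)*D) := le_max_of_le_left ih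
        nlinarith

lemma val_succ (d : ℕ → ℤ) (i : ℕ) :
    val d (i + 1) = val d i + d (i + 1) * 2 ^ (i + 1) :=
  Finset.sum_range_succ _ _

lemma val_congr {d e : ℕ → ℤ} {i : ℕ} (h : ∀ j, j ≤ i → d j = e j) :
    val d i = val e i :=
  Finset.sum_congr rfl fun j hj => by
    rw [h j (Nat.lt_succ_iff.mp (Finset.mem_range.mp hj))]

lemma val_all_zero {d : ℕ → ℤ} {i : ℕ} (h : ∀ j, j ≤ i → d j = 0) :
    val d i = 0 :=
  Finset.sum_eq_zero fun j hj => by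
    rw [h j (Nat.lt_succ_iff.mp (Finset.mem_range.mp hj))]; ring

lemma val_abs_lt {e : ℕ → ℤ} (hdig : ∀ j, e j = -1 ∨ e j = 0 ∨ e j = 1) :
    ∀ i, |val e i| < 2 ^ (i + 1) := by
  intro i
  induction i with
  | zero =>
      have : val e 0 = e 0 := by simp [val]
      rw [this]
      rcases hdig 0 with h | h | h <;> simp [h]
  | succ n ih =>
      rw [val_succ]
      have h1 : |e (n+1)| ≤ 1 := by rcases hdig (n+1) with h | h | h <;> simp [h]
      calc |val e n + e (n+1) * 2 ^ (n+1)| ≤ |val e n| + |e (n+1) * 2^(n+1)| := abs_add_le _ _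
        _ ≤ |val e n| + 1 * 2^(n+1) := by
            rw [abs_mul]
            gcongr
            · rw [abs_pow]; norm_num
        _ < 2^(n+1) + 1 * 2^(n+1) := by linarith
        _ = 2^(n+2) := by ring

lemma T_tail (D A : ℝ) {d : ℕ → ℤ} {lam : ℕ} (h : ∀ j, lam < j → d j = 0) :
    ∀ i, lam ≤ i → T D A d i = T D A d lam := by
  intro i hi
  obtain ⟨k, rfl⟩ := Nat.exists_eq_add_of_le hi
  induction k with
  | zero => rfl
  | succ n ih =>
      have : lam + (n+1) = (lam + n) + 1 := rfl
      rw [this, T_succ_def, if_pos (h _ (by omega))]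
      exact ih (by omega)

lemma val_tail {d : ℕ → ℤ} {lam : ℕ} (h : ∀ j, lam < j → d j = 0) :
    ∀ i, lam ≤ i → val d i = val d lam := by
  intro i hi
  obtain ⟨k, rfl⟩ := Nat.exists_eq_add_of_le hi
  induction k with
  | zero => rfl
  | succ n ih =>
      have : lam + (n+1) = (lam + n) + 1 := rfl
      rw [this, val_succ, h _ (by omega)]
      simpa using ih (by omega)

lemma digit_split (t : ℤ) :
    ∃ ε c' : ℤ, (ε = -1 ∨ ε = 0 ∨ ε = 1) ∧ t = ε + 2 * c' ∧
      2 * c'.natAbs + ε.natAbs = t.natAbs := by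
  rcases Int.even_or_odd t with ⟨k, hk⟩ | ⟨k, hk⟩
  · exact ⟨0, k, Or.inr (Or.inl rfl), by omega, by omega⟩
  · by_cases ht : 0 < t
    · exact ⟨1, k, Or.inr (Or.inr rfl), by omega, by omega⟩
    · exact ⟨-1, k + 1, Or.inl rfl, by omega, by omega⟩

def InvRep (D A : ℝ) (d : ℕ → ℤ) (i : ℕ) (e : ℕ → ℤ) (c : ℤ) : Prop :=
  (∀ j, e j = -1 ∨ e j = 0 ∨ e j = 1) ∧
  (∀ j, i < j → e j = 0) ∧
  (val e i + c * 2 ^ (i + 1) = val d i) ∧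
  (((∀ j, j ≤ i → e j = 0) ∧
      (c ≠ 0 → ((i:ℝ)+1) * D + ((c.natAbs:ℝ) - 1) * A ≤ T D A d i) ∧
      (2 ≤ c.natAbs → ((i:ℝ)+2) * D + ((c.natAbs:ℝ) - 1) * A ≤ T D A d i)) ∨
   (val e i ≠ 0 ∧
      (T D A e i + (if c = 0 then 0 else (c.natAbs:ℝ)) * A ≤ T D A d i) ∧
      (c ≠ 0 → ((i:ℝ)+1) * D + (c.natAbs:ℝ) * A ≤ T D A d i)))

set_option maxHeartbeats 2000000 in
lemma inv_step {D A : ℝ} (hD : 0 < D) (hDA : D ≤ A) {d : ℕ → ℤ} {i : ℕ} {e : ℕ → ℤ} {c : ℤ}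
    (h : InvRep D A d i e c) :
    ∃ e' c', InvRep D A d (i+1) e' c' ∧ (d (i+1) = 0 → 2 * c'.natAbs ≤ c.natAbs) := by
  have hA : 0 < A := lt_of_lt_of_le hD hDA
  obtain ⟨hdig, hsupp, hval, hZN⟩ := h
  obtain ⟨ε, c', hεd, ht, habs⟩ := digit_split (d (i+1) + c)
  set e' : ℕ → ℤ := Function.update e (i+1) ε with he'def
  have he'le : ∀ j, j ≤ i → e' j = e j := fun j hj =>
    Function.update_of_ne (by omega) _ _
  have he'i1 : e' (i+1) = ε := Function.update_self _ _ _
  have hdig' : ∀ j, e' j = -1 ∨ e' j = 0 ∨ e' j = 1 := by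
    intro j
    by_cases hj : j = i + 1
    · rw [hj, he'i1]; exact hεd
    · rw [he'def, Function.update_of_ne hj]; exact hdig j
  have hsupp' : ∀ j, i + 1 < j → e' j = 0 := fun j hj => by
    rw [he'def, Function.update_of_ne (by omega)]; exact hsupp j (by omega)
  have hTe' : T D A e' i = T D A e i := T_congr D A i he'le
  have hvale' : val e' i = val e i := val_congr he'le
  have hval' : val e' (i+1) + c' * 2 ^ (i+1+1) = val d (i+1) := by
    rw [val_succ, val_succ, he'i1, hvale', ← hval]
    linear_combination (-(2:ℤ)^(i+1)) * ht
  have hε1 : ε ≠ 0 → ((ε.natAbs : ℝ) = 1) := by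
    rcases hεd with h1|h1|h1 <;> simp [h1]
  have hvs : val e' (i+1) = val e i + ε * 2 ^ (i+1) := by
    rw [val_succ, hvale', he'i1]
  have hvne : ε ≠ 0 → val e' (i+1) ≠ 0 := by
    intro hε0 h0
    have habs2 := val_abs_lt hdig i
    have hvv : val e i = -(ε * 2 ^ (i+1)) := by rw [hvs] at h0; linarith
    rw [hvv, abs_neg, abs_mul] at habs2
    have h2 : |(2:ℤ) ^ (i+1)| = 2 ^ (i+1) := by
      rw [abs_pow]; norm_num
    rw [h2] at habs2
    rcases hεd with h1|h1|h1 <;> simp [h1] at habs2 <;> omega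

  have hKpos : c ≠ 0 ↔ 1 ≤ c.natAbs := by
    constructor
    · intro hc; exact Int.natAbs_pos.mpr hc
    · intro hc hc0; rw [hc0] at hc; simp at hc
  have hK'pos : c' ≠ 0 ↔ 1 ≤ c'.natAbs := by
    constructor
    · intro hc; exact Int.natAbs_pos.mpr hc
    · intro hc hc0; rw [hc0] at hc; simp at hc
  refine ⟨e', c', ⟨hdig', hsupp', hval', ?_⟩, fun hd0 => by
    rw [hd0, zero_add] at habs; omega⟩
  by_cases hd0 : d (i+1) = 0
  · -- digit zero case
    have hTd' : T D A d (i+1) = T D A d i := by rw [T_succ_def, if_pos hd0]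
    have hKK : 2 * c'.natAbs + ε.natAbs = c.natAbs := by
      rw [hd0, zero_add] at habs; exact habs
    rcases hZN with ⟨hz, hZ1, hZ2⟩ | ⟨hnz, hN0, hN1⟩
    · by_cases hε0 : ε = 0
      · -- A1 : Z → Z
        refine Or.inl ⟨?_, ?_, ?_⟩
        · intro j hj
          by_cases hji : j = i + 1
          · rw [hji, he'i1]; exact hε0
          · rw [he'le j (by omega)]; exact hz j (by omega)
        · intro hc'
          rw [hTd']
          have hk : c'.natAbs + 1 ≤ c.natAbs ∧ 2 ≤ c.natAbs := by
            have := hK'pos.mp hc'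
            rw [hε0] at hKK; simp at hKK; omega
          have hcast : (c'.natAbs:ℝ) + 1 ≤ (c.natAbs:ℝ) := by exact_mod_cast hk.1
          have := hZ2 hk.2
          have hmul : ((c'.natAbs:ℝ) - 1) * A ≤ ((c.natAbs:ℝ) - 1) * A :=
            mul_le_mul_of_nonneg_right (by linarith) hA.le
          push_cast
          linarith
        · intro hc'
          rw [hTd']
          have hk : c'.natAbs + 2 ≤ c.natAbs ∧ 2 ≤ c.natAbs := by
            rw [hε0] at hKK; simp at hKK; omega
          have hcast : (c'.natAbs:ℝ) + 2 ≤ (c.natAbs:ℝ) := by exact_mod_cast hk.1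
          have := hZ2 hk.2
          have hmul : ((c'.natAbs:ℝ) - 1) * A ≤ ((c.natAbs:ℝ) - 2) * A :=
            mul_le_mul_of_nonneg_right (by linarith) hA.le
          push_cast
          linarith
      · -- A2 : Z → N
        have hε1' : ε.natAbs = 1 := by rcases hεd with h1|h1|h1 <;> simp [h1] at hε1 ⊢; exact absurd h1 hε0
        have hKrel : 2 * c'.natAbs + 1 = c.natAbs := by omega
        have hc : c ≠ 0 := hKpos.mpr (by omega)
        have hvz : val e i = 0 := val_all_zero hz
        refine Or.inr ⟨?_, ?_, ?_⟩
        · exact hvne hε0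
        · have hTE : T D A e' (i+1) = ((i:ℝ)+1) * D := by
            rw [T_succ_def, if_neg (by rw [he'i1]; exact hε0),
              if_pos (fun j hj => by rw [he'le j (by omega)]; exact hz j (by omega)),
              he'i1, hε1 hε0]
            ring
          rw [hTE, hTd']
          have hZ1' := hZ1 hc
          by_cases hc' : c' = 0
          · rw [if_pos hc']
            have h1 : (1:ℝ) ≤ (c.natAbs:ℝ) := by exact_mod_cast hKpos.mp hc
            nlinarith
          · rw [if_neg hc']
            have hcast : (c'.natAbs:ℝ) ≤ (c.natAbs:ℝ) - 1 := by
              have : c'.natAbs + 1 ≤ c.natAbs := by omega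
              have h2 : (c'.natAbs:ℝ) + 1 ≤ (c.natAbs:ℝ) := by exact_mod_cast this
              linarith
            have hmul : (c'.natAbs:ℝ) * A ≤ ((c.natAbs:ℝ) - 1) * A :=
              mul_le_mul_of_nonneg_right hcast hA.le
            linarith
        · intro hc'
          rw [hTd']
          have hk : c'.natAbs + 1 ≤ c.natAbs ∧ 2 ≤ c.natAbs := by
            have := hK'pos.mp hc'; omega
          have := hZ2 hk.2
          have hcast : (c'.natAbs:ℝ) + 1 ≤ (c.natAbs:ℝ) := by exact_mod_cast hk.1
          have hmul : (c'.natAbs:ℝ) * A ≤ ((c.natAbs:ℝ) - 1) * A :=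
            mul_le_mul_of_nonneg_right (by linarith) hA.le
          push_cast
          linarith
    · by_cases hε0 : ε = 0
      · -- A3 : N → N
        have hTE : T D A e' (i+1) = T D A e i := by
          rw [T_succ_def, if_pos (by rw [he'i1]; exact hε0)]; exact hTe'
        refine Or.inr ⟨?_, ?_, ?_⟩
        · rw [hvs, hε0]; simpa using hnz
        · rw [hTE, hTd']
          by_cases hc' : c' = 0
          · rw [if_pos hc']
            by_cases hc0 : c = 0
            · rw [if_pos hc0] at hN0; linarith
            · rw [if_neg hc0] at hN0
              have h1 : (0:ℝ) ≤ (c.natAbs:ℝ) := by positivity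
              nlinarith
          · rw [if_neg hc']
            have hc0 : c ≠ 0 := hKpos.mpr (by have := hK'pos.mp hc'; omega)
            rw [if_neg hc0] at hN0
            have hcast : (c'.natAbs:ℝ) ≤ (c.natAbs:ℝ) := by
              have : c'.natAbs ≤ c.natAbs := by omega
              exact_mod_cast this
            have hmul : (c'.natAbs:ℝ) * A ≤ (c.natAbs:ℝ) * A :=
              mul_le_mul_of_nonneg_right hcast hA.le
            linarith
        · intro hc'
          rw [hTd']
          have hc0 : c ≠ 0 := hKpos.mpr (by have := hK'pos.mp hc'; omega)
          have hN1' := hN1 hc0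
          have hcast : (c'.natAbs:ℝ) + 1 ≤ (c.natAbs:ℝ) := by
            have : c'.natAbs + 1 ≤ c.natAbs := by
              have := hK'pos.mp hc'
              rw [hε0] at hKK; simp at hKK; omega
            exact_mod_cast this
          have hmul : (c'.natAbs:ℝ) * A ≤ ((c.natAbs:ℝ) - 1) * A :=
            mul_le_mul_of_nonneg_right (by linarith) hA.le
          push_cast
          linarith
      · -- A4 : N → N, emit
        have hε1' : ε.natAbs = 1 := by rcases hεd with h1|h1|h1 <;> first | (exact absurd h1 hε0) | simp [h1]
        have hKrel : 2 * c'.natAbs + 1 = c.natAbs := by omega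
        have hc : c ≠ 0 := hKpos.mpr (by omega)
        have hne : ¬ ∀ j < i + 1, e' j = 0 := by
          intro hh
          exact hnz (val_all_zero (fun j hj => by rw [← he'le j hj]; exact hh j (by omega)))
        have hTE : T D A e' (i+1) = max (T D A e i) (((i:ℝ)+1) * D) + 1 * A := by
          rw [T_succ_def, if_neg (by rw [he'i1]; exact hε0), if_neg hne, he'i1, hε1 hε0, hTe']
        refine Or.inr ⟨hvne hε0, ?_, ?_⟩
        · rw [hTE, hTd']
          rw [if_neg hc] at hN0
          have hN1' := hN1 hc
          have h1 : (1:ℝ) ≤ (c.natAbs:ℝ) := by exact_mod_cast hKpos.mp hc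
          have hcc : (if c' = 0 then (0:ℝ) else (c'.natAbs:ℝ)) + 1 ≤ (c.natAbs:ℝ) := by
            by_cases hc' : c' = 0
            · rw [if_pos hc']; linarith
            · rw [if_neg hc']
              have : c'.natAbs + 1 ≤ c.natAbs := by have := hK'pos.mp hc'; omega
              have h2 : (c'.natAbs:ℝ) + 1 ≤ (c.natAbs:ℝ) := by exact_mod_cast this
              linarith
          have hmul : ((if c' = 0 then (0:ℝ) else (c'.natAbs:ℝ)) + 1) * A ≤ (c.natAbs:ℝ) * A :=
            mul_le_mul_of_nonneg_right hcc hA.le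
          rcases le_total (T D A e i) (((i:ℝ)+1) * D) with hm | hm
          · rw [max_eq_right hm]; nlinarith
          · rw [max_eq_left hm]; nlinarith
        · intro hc'
          rw [hTd']
          have hN1' := hN1 hc
          have hcast : (c'.natAbs:ℝ) + 1 ≤ (c.natAbs:ℝ) := by
            have : c'.natAbs + 1 ≤ c.natAbs := by omega
            exact_mod_cast this
          have hmul : (c'.natAbs:ℝ) * A ≤ ((c.natAbs:ℝ) - 1) * A :=
            mul_le_mul_of_nonneg_right (by linarith) hA.le
          push_cast
          linarith
  · -- d (i+1) ≠ 0
    have hv1 : 1 ≤ (d (i+1)).natAbs := Int.natAbs_pos.mpr hd0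
    have hv1R : (1:ℝ) ≤ ((d (i+1)).natAbs:ℝ) := by exact_mod_cast hv1
    have hτ1 : ((i:ℝ)+1) * D + (((d (i+1)).natAbs:ℝ) - 1) * A ≤ T D A d (i+1) := by
      rw [T_succ_def, if_neg hd0]
      split_ifs with hp
      · exact le_rfl
      · have h1 : ((i:ℝ)+1)*D ≤ max (T D A d i) (((i:ℝ)+1)*D) := le_max_right _ _
        have h2 : (((d (i+1)).natAbs:ℝ) - 1) * A ≤ ((d (i+1)).natAbs:ℝ) * A :=
          mul_le_mul_of_nonneg_right (by linarith) hA.le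
        linarith
    have hpre : (c ≠ 0 ∨ val e i ≠ 0) →
        T D A d (i+1) = max (T D A d i) (((i:ℝ)+1)*D) + ((d (i+1)).natAbs:ℝ) * A := by
      intro hcv
      have hnall : ¬ ∀ j < i + 1, d j = 0 := by
        intro hall
        have hvd : val d i = 0 := val_all_zero (fun j hj => hall j (by omega))
        rw [← hval] at hvd
        by_cases hc : c = 0
        · rw [hc] at hvd; simp at hvd
          rcases hcv with hc' | hv
          · exact hc' hc
          · exact hv hvd
        · have h1 : (1:ℤ) ≤ |c| := Int.one_le_abs hc
          have h2 := val_abs_lt hdig i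
          have h3 : |val e i| = |c| * 2^(i+1) := by
            rw [show val e i = -(c * 2^(i+1)) by linarith, abs_neg, abs_mul, abs_pow]
            norm_num
          have h4 : (1:ℤ) * 2^(i+1) ≤ |c| * 2^(i+1) :=
            mul_le_mul_of_nonneg_right h1 (by positivity)
          rw [h3] at h2; linarith
      rw [T_succ_def, if_neg hd0, if_neg hnall]
    rcases hZN with ⟨hz, hZ1, hZ2⟩ | ⟨hnz, hN0, hN1⟩
    · -- Z branch
      have hvz : val e i = 0 := val_all_zero hz
      by_cases hc0 : c = 0
      · have htabs : 2 * c'.natAbs + ε.natAbs = (d (i+1)).natAbs := by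
          rw [hc0, add_zero] at habs; exact habs
        by_cases hε0 : ε = 0
        · -- B1 : Z → Z
          refine Or.inl ⟨?_, ?_, ?_⟩
          · intro j hj
            by_cases hji : j = i + 1
            · rw [hji, he'i1]; exact hε0
            · rw [he'le j (by omega)]; exact hz j (by omega)
          · intro hc'
            have hk : c'.natAbs + 1 ≤ (d (i+1)).natAbs := by
              have := hK'pos.mp hc'
              rw [hε0] at htabs; simp at htabs; omega
            have hcast : (c'.natAbs:ℝ) + 1 ≤ ((d (i+1)).natAbs:ℝ) := by exact_mod_cast hk
            have hmul : ((c'.natAbs:ℝ) - 1) * A ≤ (((d (i+1)).natAbs:ℝ) - 2) * A :=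
              mul_le_mul_of_nonneg_right (by linarith) hA.le
            push_cast
            linarith
          · intro h2
            have hk : c'.natAbs + 2 ≤ (d (i+1)).natAbs := by
              rw [hε0] at htabs; simp at htabs; omega
            have hcast : (c'.natAbs:ℝ) + 2 ≤ ((d (i+1)).natAbs:ℝ) := by exact_mod_cast hk
            have hmul : ((c'.natAbs:ℝ) - 1) * A ≤ (((d (i+1)).natAbs:ℝ) - 3) * A :=
              mul_le_mul_of_nonneg_right (by linarith) hA.le
            push_cast
            linarith
        · -- B2 : Z → N
          have hε1' : ε.natAbs = 1 := by
            rcases hεd with h1|h1|h1 <;> first | (exact absurd h1 hε0) | simp [h1]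
          have hrel : 2 * c'.natAbs + 1 = (d (i+1)).natAbs := by omega
          have hTE : T D A e' (i+1) = ((i:ℝ)+1) * D := by
            rw [T_succ_def, if_neg (by rw [he'i1]; exact hε0),
              if_pos (fun j hj => by rw [he'le j (by omega)]; exact hz j (by omega)),
              he'i1, hε1 hε0]
            ring
          refine Or.inr ⟨hvne hε0, ?_, ?_⟩
          · rw [hTE]
            by_cases hc' : c' = 0
            · rw [if_pos hc']
              have hmul : (0:ℝ) ≤ (((d (i+1)).natAbs:ℝ) - 1) * A :=
                mul_nonneg (by linarith) hA.le
              linarith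
            · rw [if_neg hc']
              have hk : c'.natAbs + 1 ≤ (d (i+1)).natAbs := by omega
              have hcast : (c'.natAbs:ℝ) + 1 ≤ ((d (i+1)).natAbs:ℝ) := by exact_mod_cast hk
              have hmul : (c'.natAbs:ℝ) * A ≤ (((d (i+1)).natAbs:ℝ) - 1) * A :=
                mul_le_mul_of_nonneg_right (by linarith) hA.le
              linarith
          · intro hc'
            have hk : c'.natAbs + 2 ≤ (d (i+1)).natAbs := by
              have := hK'pos.mp hc'; omega
            have hcast : (c'.natAbs:ℝ) + 2 ≤ ((d (i+1)).natAbs:ℝ) := by exact_mod_cast hk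
            have hmul : (c'.natAbs:ℝ) * A ≤ (((d (i+1)).natAbs:ℝ) - 2) * A :=
              mul_le_mul_of_nonneg_right (by linarith) hA.le
            push_cast
            linarith
      · -- Z branch, c ≠ 0
        have hmax := hpre (Or.inl hc0)
        have hZ1' := hZ1 hc0
        have hlow1 : ((i:ℝ)+1)*D + ((c.natAbs:ℝ) - 1)*A + ((d (i+1)).natAbs:ℝ)*A ≤
            T D A d (i+1) := by
          rw [hmax]
          have := le_max_left (T D A d i) (((i:ℝ)+1)*D)
          linarith
        have hlow2 : ((i:ℝ)+1)*D + ((d (i+1)).natAbs:ℝ)*A ≤ T D A d (i+1) := by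
          rw [hmax]
          have := le_max_right (T D A d i) (((i:ℝ)+1)*D)
          linarith
        have htabs2 : 2 * c'.natAbs + ε.natAbs ≤ (d (i+1)).natAbs + c.natAbs := by omega
        by_cases hε0 : ε = 0
        · -- B3 : Z → Z
          refine Or.inl ⟨?_, ?_, ?_⟩
          · intro j hj
            by_cases hji : j = i + 1
            · rw [hji, he'i1]; exact hε0
            · rw [he'le j (by omega)]; exact hz j (by omega)
          · intro hc'
            have hk : c'.natAbs + 1 ≤ c.natAbs + (d (i+1)).natAbs := by
              have := hK'pos.mp hc'; omega
            have hcast : (c'.natAbs:ℝ) + 1 ≤ (c.natAbs:ℝ) + ((d (i+1)).natAbs:ℝ) := by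
              exact_mod_cast hk
            have hmul : ((c'.natAbs:ℝ) - 1) * A ≤
                ((c.natAbs:ℝ) + ((d (i+1)).natAbs:ℝ) - 2) * A :=
              mul_le_mul_of_nonneg_right (by linarith) hA.le
            push_cast
            linarith
          · intro h2
            by_cases hK2 : 2 ≤ c.natAbs
            · have hZ2' := hZ2 hK2
              have hlow3 : ((i:ℝ)+2)*D + ((c.natAbs:ℝ) - 1)*A + ((d (i+1)).natAbs:ℝ)*A ≤
                  T D A d (i+1) := by
                rw [hmax]
                have := le_max_left (T D A d i) (((i:ℝ)+1)*D)
                linarith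
              have hk : c'.natAbs + 1 ≤ c.natAbs + (d (i+1)).natAbs := by omega
              have hcast : (c'.natAbs:ℝ) + 1 ≤ (c.natAbs:ℝ) + ((d (i+1)).natAbs:ℝ) := by
                exact_mod_cast hk
              have hmul : ((c'.natAbs:ℝ) - 1) * A ≤
                  ((c.natAbs:ℝ) + ((d (i+1)).natAbs:ℝ) - 2) * A :=
                mul_le_mul_of_nonneg_right (by linarith) hA.le
              push_cast
              linarith
            · have hK1 : c.natAbs = 1 := by
                have := hKpos.mp hc0; omega
              have hk : c'.natAbs + 2 ≤ (d (i+1)).natAbs + 1 := by omega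
              have hcast : (c'.natAbs:ℝ) + 2 ≤ ((d (i+1)).natAbs:ℝ) + 1 := by exact_mod_cast hk
              have hmul : ((c'.natAbs:ℝ) - 1) * A ≤ (((d (i+1)).natAbs:ℝ) - 2) * A :=
                mul_le_mul_of_nonneg_right (by linarith) hA.le
              push_cast
              linarith
        · -- B4 : Z → N
          have hε1' : ε.natAbs = 1 := by
            rcases hεd with h1|h1|h1 <;> first | (exact absurd h1 hε0) | simp [h1]
          have hTE : T D A e' (i+1) = ((i:ℝ)+1) * D := by
            rw [T_succ_def, if_neg (by rw [he'i1]; exact hε0),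
              if_pos (fun j hj => by rw [he'le j (by omega)]; exact hz j (by omega)),
              he'i1, hε1 hε0]
            ring
          refine Or.inr ⟨hvne hε0, ?_, ?_⟩
          · rw [hTE]
            by_cases hc' : c' = 0
            · rw [if_pos hc']
              have h1R : (1:ℝ) ≤ (c.natAbs:ℝ) := by exact_mod_cast hKpos.mp hc0
              have hmul : (0:ℝ) ≤ ((c.natAbs:ℝ) - 1) * A := mul_nonneg (by linarith) hA.le
              have hmul2 : (0:ℝ) ≤ ((d (i+1)).natAbs:ℝ) * A := by positivity
              linarith
            · rw [if_neg hc']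
              have hk : c'.natAbs + 1 ≤ c.natAbs + (d (i+1)).natAbs := by
                have := hK'pos.mp hc'; omega
              have hcast : (c'.natAbs:ℝ) + 1 ≤ (c.natAbs:ℝ) + ((d (i+1)).natAbs:ℝ) := by
                exact_mod_cast hk
              have hmul : (c'.natAbs:ℝ) * A ≤
                  ((c.natAbs:ℝ) - 1) * A + ((d (i+1)).natAbs:ℝ) * A := by
                have := mul_le_mul_of_nonneg_right
                  (show (c'.natAbs:ℝ) ≤ (c.natAbs:ℝ) - 1 + ((d (i+1)).natAbs:ℝ) by linarith) hA.le
                linarith [this]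
              linarith
          · intro hc'
            by_cases hK2 : 2 ≤ c.natAbs
            · have hZ2' := hZ2 hK2
              have hlow3 : ((i:ℝ)+2)*D + ((c.natAbs:ℝ) - 1)*A + ((d (i+1)).natAbs:ℝ)*A ≤
                  T D A d (i+1) := by
                rw [hmax]
                have := le_max_left (T D A d i) (((i:ℝ)+1)*D)
                linarith
              have hk : c'.natAbs + 1 ≤ c.natAbs + (d (i+1)).natAbs := by
                have := hK'pos.mp hc'; omega
              have hcast : (c'.natAbs:ℝ) + 1 ≤ (c.natAbs:ℝ) + ((d (i+1)).natAbs:ℝ) := by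
                exact_mod_cast hk
              have hmul : (c'.natAbs:ℝ) * A ≤
                  ((c.natAbs:ℝ) - 1) * A + ((d (i+1)).natAbs:ℝ) * A := by
                have := mul_le_mul_of_nonneg_right
                  (show (c'.natAbs:ℝ) ≤ (c.natAbs:ℝ) - 1 + ((d (i+1)).natAbs:ℝ) by linarith) hA.le
                linarith [this]
              push_cast
              linarith
            · have hK1 : c.natAbs = 1 := by
                have := hKpos.mp hc0; omega
              have hk : c'.natAbs + 1 ≤ (d (i+1)).natAbs := by
                have := hK'pos.mp hc'; omega
              have hcast : (c'.natAbs:ℝ) + 1 ≤ ((d (i+1)).natAbs:ℝ) := by exact_mod_cast hk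
              have hmul : (c'.natAbs:ℝ) * A ≤ (((d (i+1)).natAbs:ℝ) - 1) * A :=
                mul_le_mul_of_nonneg_right (by linarith) hA.le
              push_cast
              linarith
    · -- N branch
      have hmax := hpre (Or.inr hnz)
      have hlowt : T D A d i + ((d (i+1)).natAbs:ℝ)*A ≤ T D A d (i+1) := by
        rw [hmax]
        have := le_max_left (T D A d i) (((i:ℝ)+1)*D)
        linarith
      have hlowd : ((i:ℝ)+1)*D + ((d (i+1)).natAbs:ℝ)*A ≤ T D A d (i+1) := by
        rw [hmax]
        have := le_max_right (T D A d i) (((i:ℝ)+1)*D)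
        linarith
      have hTee : T D A e i ≤ T D A d i := by
        by_cases hcc : c = 0
        · rw [if_pos hcc] at hN0; linarith
        · rw [if_neg hcc] at hN0
          have : (0:ℝ) ≤ (c.natAbs:ℝ) * A := by positivity
          linarith
      by_cases hε0 : ε = 0
      · -- B5 : N → N
        have hTE : T D A e' (i+1) = T D A e i := by
          rw [T_succ_def, if_pos (by rw [he'i1]; exact hε0)]; exact hTe'
        refine Or.inr ⟨?_, ?_, ?_⟩
        · rw [hvs, hε0]; simpa using hnz
        · rw [hTE]
          by_cases hc' : c' = 0
          · rw [if_pos hc']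
            have : (0:ℝ) ≤ ((d (i+1)).natAbs:ℝ) * A := by positivity
            linarith
          · rw [if_neg hc']
            by_cases hc0 : c = 0
            · rw [if_pos hc0] at hN0
              have hk : c'.natAbs ≤ (d (i+1)).natAbs := by
                rw [hc0, add_zero] at habs; omega
              have hcast : (c'.natAbs:ℝ) ≤ ((d (i+1)).natAbs:ℝ) := by exact_mod_cast hk
              have hmul : (c'.natAbs:ℝ) * A ≤ ((d (i+1)).natAbs:ℝ) * A :=
                mul_le_mul_of_nonneg_right hcast hA.le
              linarith
            · rw [if_neg hc0] at hN0
              have hk : c'.natAbs ≤ c.natAbs + (d (i+1)).natAbs := by omega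
              have hcast : (c'.natAbs:ℝ) ≤ (c.natAbs:ℝ) + ((d (i+1)).natAbs:ℝ) := by
                exact_mod_cast hk
              have hmul : (c'.natAbs:ℝ) * A ≤ ((c.natAbs:ℝ) + ((d (i+1)).natAbs:ℝ)) * A :=
                mul_le_mul_of_nonneg_right hcast hA.le
              nlinarith
        · intro hc'
          by_cases hc0 : c = 0
          · have hk : c'.natAbs + 1 ≤ (d (i+1)).natAbs := by
              have := hK'pos.mp hc'
              rw [hc0, add_zero] at habs
              rw [hε0] at habs; simp at habs; omega
            have hcast : (c'.natAbs:ℝ) + 1 ≤ ((d (i+1)).natAbs:ℝ) := by exact_mod_cast hk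
            have hmul : (c'.natAbs:ℝ) * A ≤ (((d (i+1)).natAbs:ℝ) - 1) * A :=
              mul_le_mul_of_nonneg_right (by linarith) hA.le
            push_cast
            linarith
          · have hN1' := hN1 hc0
            have hlow : ((i:ℝ)+1)*D + (c.natAbs:ℝ)*A + ((d (i+1)).natAbs:ℝ)*A ≤
                T D A d (i+1) := by
              rw [hmax]
              have := le_max_left (T D A d i) (((i:ℝ)+1)*D)
              linarith
            have hk : c'.natAbs + 1 ≤ c.natAbs + (d (i+1)).natAbs := by
              have := hK'pos.mp hc'; omega
            have hcast : (c'.natAbs:ℝ) + 1 ≤ (c.natAbs:ℝ) + ((d (i+1)).natAbs:ℝ) := by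
              exact_mod_cast hk
            have hmul : (c'.natAbs:ℝ) * A ≤
                ((c.natAbs:ℝ) + ((d (i+1)).natAbs:ℝ) - 1) * A :=
              mul_le_mul_of_nonneg_right (by linarith) hA.le
            push_cast
            nlinarith
      · -- B6 : N → N, emit
        have hε1' : ε.natAbs = 1 := by
          rcases hεd with h1|h1|h1 <;> first | (exact absurd h1 hε0) | simp [h1]
        have hne : ¬ ∀ j < i + 1, e' j = 0 := by
          intro hh
          exact hnz (val_all_zero (fun j hj => by rw [← he'le j hj]; exact hh j (by omega)))
        have hTE : T D A e' (i+1) = max (T D A e i) (((i:ℝ)+1) * D) + 1 * A := by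
          rw [T_succ_def, if_neg (by rw [he'i1]; exact hε0), if_neg hne, he'i1, hε1 hε0, hTe']
        refine Or.inr ⟨hvne hε0, ?_, ?_⟩
        · rw [hTE]
          have hcoef : (if c' = 0 then (0:ℝ) else (c'.natAbs:ℝ)) + 1 ≤
              (if c = 0 then (0:ℝ) else (c.natAbs:ℝ)) + ((d (i+1)).natAbs:ℝ) := by
            by_cases hc0 : c = 0
            · by_cases hc' : c' = 0
              · rw [if_pos hc0, if_pos hc']; linarith
              · rw [if_pos hc0, if_neg hc']
                have hk : c'.natAbs + 1 ≤ (d (i+1)).natAbs := by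
                  rw [hc0, add_zero] at habs; omega
                have hcast : (c'.natAbs:ℝ) + 1 ≤ ((d (i+1)).natAbs:ℝ) := by exact_mod_cast hk
                linarith
            · by_cases hc' : c' = 0
              · rw [if_neg hc0, if_pos hc']
                have h1R : (1:ℝ) ≤ (c.natAbs:ℝ) := by exact_mod_cast hKpos.mp hc0
                linarith
              · rw [if_neg hc0, if_neg hc']
                have hk : c'.natAbs + 1 ≤ c.natAbs + (d (i+1)).natAbs := by omega
                have hcast : (c'.natAbs:ℝ) + 1 ≤ (c.natAbs:ℝ) + ((d (i+1)).natAbs:ℝ) := by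
                  exact_mod_cast hk
                linarith
          have hm0 : (0:ℝ) ≤ (if c = 0 then (0:ℝ) else (c.natAbs:ℝ)) := by
            by_cases hc0 : c = 0
            · rw [if_pos hc0]
            · rw [if_neg hc0]; positivity
          have hmul : ((if c' = 0 then (0:ℝ) else (c'.natAbs:ℝ)) + 1) * A ≤
              ((if c = 0 then (0:ℝ) else (c.natAbs:ℝ)) + ((d (i+1)).natAbs:ℝ)) * A :=
            mul_le_mul_of_nonneg_right hcoef hA.le
          rcases le_total (T D A e i) (((i:ℝ)+1) * D) with hm | hm
          · rw [max_eq_right hm]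
            have hlow : ((i:ℝ)+1)*D + (if c = 0 then (0:ℝ) else (c.natAbs:ℝ))*A
                + ((d (i+1)).natAbs:ℝ)*A ≤ T D A d (i+1) := by
              by_cases hc0 : c = 0
              · rw [if_pos hc0]; linarith
              · rw [if_neg hc0]
                have hN1' := hN1 hc0
                rw [hmax]
                have := le_max_left (T D A d i) (((i:ℝ)+1)*D)
                linarith
            nlinarith
          · rw [max_eq_left hm]
            have hlow : T D A e i + (if c = 0 then (0:ℝ) else (c.natAbs:ℝ))*A
                + ((d (i+1)).natAbs:ℝ)*A ≤ T D A d (i+1) := by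
              linarith
            nlinarith
        · intro hc'
          by_cases hc0 : c = 0
          · have hk : c'.natAbs + 1 ≤ (d (i+1)).natAbs := by
              have := hK'pos.mp hc'
              rw [hc0, add_zero] at habs; omega
            have hcast : (c'.natAbs:ℝ) + 1 ≤ ((d (i+1)).natAbs:ℝ) := by exact_mod_cast hk
            have hmul : (c'.natAbs:ℝ) * A ≤ (((d (i+1)).natAbs:ℝ) - 1) * A :=
              mul_le_mul_of_nonneg_right (by linarith) hA.le
            push_cast
            linarith
          · have hN1' := hN1 hc0
            have hlow : ((i:ℝ)+1)*D + (c.natAbs:ℝ)*A + ((d (i+1)).natAbs:ℝ)*A ≤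
                T D A d (i+1) := by
              rw [hmax]
              have := le_max_left (T D A d i) (((i:ℝ)+1)*D)
              linarith
            have hk : c'.natAbs + 1 ≤ c.natAbs + (d (i+1)).natAbs := by
              have := hK'pos.mp hc'; omega
            have hcast : (c'.natAbs:ℝ) + 1 ≤ (c.natAbs:ℝ) + ((d (i+1)).natAbs:ℝ) := by
              exact_mod_cast hk
            have hmul : (c'.natAbs:ℝ) * A ≤
                ((c.natAbs:ℝ) + ((d (i+1)).natAbs:ℝ) - 1) * A :=
              mul_le_mul_of_nonneg_right (by linarith) hA.le
            push_cast
            linarith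

lemma inv_base {D A : ℝ} (hD : 0 < D) (hDA : D ≤ A) (d : ℕ → ℤ) :
    ∃ e c, InvRep D A d 0 e c := by
  have hA : 0 < A := lt_of_lt_of_le hD hDA
  obtain ⟨ε, c', hεd, ht, habs⟩ := digit_split (d 0)
  set ee : ℕ → ℤ := fun j => if j = 0 then ε else 0 with hee
  have hee0 : ee 0 = ε := rfl
  refine ⟨ee, c', ?_, ?_, ?_, ?_⟩
  · intro j
    by_cases hj : j = 0
    · have hh : ee j = ε := by rw [hee]; simp [hj]
      rw [hh]; exact hεd
    · have hh : ee j = 0 := by rw [hee]; simp [hj]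
      rw [hh]; exact Or.inr (Or.inl rfl)
  · intro j hj
    rw [hee]; simp only [if_neg (by omega : j ≠ 0)]
  · have hv0 : val ee 0 = ε := by simp [val, hee]
    have hvd : val d 0 = d 0 := by simp [val]
    rw [hv0, hvd]
    have h2 : (2:ℤ) ^ (0+1) = 2 := by norm_num
    rw [h2]
    omega
  · by_cases hε0 : ε = 0
    · refine Or.inl ⟨?_, ?_, ?_⟩
      · intro j hj
        have : j = 0 := by omega
        rw [this, hee0, hε0]
      · intro hc'
        have hc1 : 1 ≤ c'.natAbs := Int.natAbs_pos.mpr hc'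
        have hd00 : d 0 ≠ 0 := by
          intro h0; rw [h0] at habs; simp at habs; omega
        rw [T_zero_def, if_neg hd00]
        have hk : c'.natAbs + 1 ≤ (d 0).natAbs := by omega
        have hcast : (c'.natAbs:ℝ) + 1 ≤ ((d 0).natAbs:ℝ) := by exact_mod_cast hk
        have hmul : ((c'.natAbs:ℝ) - 1) * A ≤ (((d 0).natAbs:ℝ) - 2) * A :=
          mul_le_mul_of_nonneg_right (by linarith) hA.le
        push_cast
        linarith
      · intro h2
        have hd00 : d 0 ≠ 0 := by
          intro h0; rw [h0] at habs; simp at habs; omega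
        rw [T_zero_def, if_neg hd00]
        have hk : c'.natAbs + 2 ≤ (d 0).natAbs := by omega
        have hcast : (c'.natAbs:ℝ) + 2 ≤ ((d 0).natAbs:ℝ) := by exact_mod_cast hk
        have hmul : ((c'.natAbs:ℝ) - 1) * A ≤ (((d 0).natAbs:ℝ) - 3) * A :=
          mul_le_mul_of_nonneg_right (by linarith) hA.le
        push_cast
        linarith
    · have hε1' : ε.natAbs = 1 := by
        rcases hεd with h1|h1|h1 <;> first | (exact absurd h1 hε0) | simp [h1]
      have hd00 : d 0 ≠ 0 := by
        intro h0; rw [h0] at habs; simp at habs; omega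
      have hTE : T D A ee 0 = ((ε.natAbs:ℝ) - 1) * A := by
        rw [T_zero_def, if_neg (by rw [hee0]; exact hε0), hee0]
      refine Or.inr ⟨?_, ?_, ?_⟩
      · have hv0 : val ee 0 = ε := by simp [val, hee]
        rw [hv0]; exact hε0
      · rw [hTE, hε1', T_zero_def, if_neg hd00]
        by_cases hc' : c' = 0
        · rw [if_pos hc']
          have hvk : 1 ≤ (d 0).natAbs := Int.natAbs_pos.mpr hd00
          have hcast : (1:ℝ) ≤ ((d 0).natAbs:ℝ) := by exact_mod_cast hvk
          have hmul : (0:ℝ) ≤ (((d 0).natAbs:ℝ) - 1) * A := mul_nonneg (by linarith) hA.le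
          push_cast
          linarith
        · rw [if_neg hc']
          have hk : c'.natAbs + 1 ≤ (d 0).natAbs := by omega
          have hcast : (c'.natAbs:ℝ) + 1 ≤ ((d 0).natAbs:ℝ) := by exact_mod_cast hk
          have hmul : (c'.natAbs:ℝ) * A ≤ (((d 0).natAbs:ℝ) - 1) * A :=
            mul_le_mul_of_nonneg_right (by linarith) hA.le
          push_cast
          linarith
      · intro hc'
        have hc1 : 1 ≤ c'.natAbs := Int.natAbs_pos.mpr hc'
        rw [T_zero_def, if_neg hd00]
        have hk : c'.natAbs + 2 ≤ (d 0).natAbs := by omega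
        have hcast : (c'.natAbs:ℝ) + 2 ≤ ((d 0).natAbs:ℝ) := by exact_mod_cast hk
        have hmul : (c'.natAbs:ℝ) * A ≤ (((d 0).natAbs:ℝ) - 2) * A :=
          mul_le_mul_of_nonneg_right (by linarith) hA.le
        push_cast
        linarith

lemma inv_all {D A : ℝ} (hD : 0 < D) (hDA : D ≤ A) (d : ℕ → ℤ) :
    ∀ i, ∃ e c, InvRep D A d i e c := by
  intro i
  induction i with
  | zero => exact inv_base hD hDA d
  | succ n ih =>
      obtain ⟨e, c, h⟩ := ih
      obtain ⟨e', c', h', _⟩ := inv_step hD hDA h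
      exact ⟨e', c', h'⟩

lemma inv_finish {D A : ℝ} (hD : 0 < D) (hDA : D ≤ A) {d : ℕ → ℤ} {lam : ℕ}
    (hdz : ∀ j, lam < j → d j = 0) :
    ∀ K : ℕ, ∀ i e c, lam ≤ i → InvRep D A d i e c → c.natAbs ≤ K →
      ∃ i' e', lam ≤ i' ∧ InvRep D A d i' e' 0 := by
  intro K
  induction K with
  | zero =>
      intro i e c hi h hc
      have hc0 : c = 0 := by omega
      exact ⟨i, e, hi, hc0 ▸ h⟩
  | succ K ih =>
      intro i e c hi h hc
      by_cases hc0 : c = 0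
      · exact ⟨i, e, hi, hc0 ▸ h⟩
      · obtain ⟨e', c', h', hcb⟩ := inv_step hD hDA h
        have hz : d (i+1) = 0 := hdz _ (by omega)
        have hb := hcb hz
        have hp : 1 ≤ c.natAbs := Int.natAbs_pos.mpr hc0
        exact ih (i+1) e' c' (by omega) h' (by omega)

/-- The digit set {-1,0,1} suffices: for any representation over any digit
set (arbitrary integer digits), there is a {-1,0,1}-representation of the
same value with no larger parallel computation time, when 0 < D ≤ A. -/
theorem stmt5 (D A : ℝ) (hD : 0 < D) (hDA : D ≤ A)
    (lam : ℕ) (d : ℕ → ℤ) :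
    ∃ (lam' : ℕ) (d' : ℕ → ℤ),
      (∀ i, d' i = -1 ∨ d' i = 0 ∨ d' i = 1) ∧
      val d' lam' = val d lam ∧
      T D A d' lam' ≤ T D A d lam := by
  have hA : 0 < A := lt_of_lt_of_le hD hDA
  set dt : ℕ → ℤ := fun j => if j ≤ lam then d j else 0 with hdtdef
  have hagree : ∀ j, j ≤ lam → dt j = d j := fun j hj => if_pos hj
  have hdz : ∀ j, lam < j → dt j = 0 := fun j hj => if_neg (by omega)
  obtain ⟨e, c, h⟩ := inv_all hD hDA dt lam
  obtain ⟨i', e', hi', h0⟩ := inv_finish hD hDA hdz c.natAbs lam e c le_rfl h le_rfl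
  obtain ⟨hdig', hsupp', hval', hZN⟩ := h0
  refine ⟨i', e', hdig', ?_, ?_⟩
  · have h1 : val e' i' = val dt i' := by simpa using hval'
    rw [h1, val_tail hdz i' hi']
    exact val_congr hagree
  · have hTd : T D A dt i' = T D A dt lam := T_tail D A hdz i' hi'
    have hTlam : T D A dt lam = T D A d lam := T_congr D A lam hagree
    have hTnn : 0 ≤ T D A dt i' := T_nonneg hD.le hA.le dt i'
    rcases hZN with ⟨hz, _, _⟩ | ⟨_, hN0, _⟩
    · have hz0 : T D A e' i' = 0 := T_all_zero D A i' hz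
      rw [hz0, ← hTlam, ← hTd]
      exact hTnn
    · have h2 : T D A e' i' ≤ T D A dt i' := by simpa using hN0
      rw [← hTlam, ← hTd]
      exact h2
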